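/- Let G be a finite simple graph with at least one vertex. If there exists a 0-1 state v on G, then α(G; c_G) = c(G) and ∑_{i ∈ V(G)} c_G(i)·v(i) = α(G; c_G). -/

import Mathlib

open Finset

/-- A maximal clique of a simple graph, as a finite set of vertices. -/
def IsMaxClique {V : Type*} (G : SimpleGraph V) (C : Finset V) : Prop :=
  G.IsClique (C : Set V) ∧ ∀ D : Finset V, G.IsClique (D : Set V) → C ⊆ D → D = C

/-- The finite set of all maximal cliques of a finite simple graph. -/
noncomputable def maxCliques {V : Type*} [Fintype V] (G : SimpleGraph V) :
    Finset (Finset V) := by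
  classical exact Finset.univ.filter (fun C => IsMaxClique G C)

/-- `c(G)`: the total number of maximal cliques of `G`. -/
noncomputable def numMaxCliques {V : Type*} [Fintype V] (G : SimpleGraph V) : ℕ :=
  (maxCliques G).card

/-- `c_G(i)`: the number of maximal cliques of `G` containing the vertex `i`. -/
noncomputable def cG {V : Type*} [Fintype V] (G : SimpleGraph V) (i : V) : ℕ := by
  classical exact ((maxCliques G).filter (fun C => i ∈ C)).card

/-- A state on a finite simple graph: values in `[0,1]` summing to `1` on each
maximal clique. -/
def IsGraphState {V : Type*} [Fintype V] (G : SimpleGraph V) (p : V → ℝ) : Prop :=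
  (∀ i, 0 ≤ p i ∧ p i ≤ 1) ∧ ∀ C ∈ maxCliques G, ∑ i ∈ C, p i = 1

/-- An independent set of a simple graph: pairwise non-adjacent vertices. -/
def IsIndep {V : Type*} (G : SimpleGraph V) (I : Finset V) : Prop :=
  ∀ i ∈ I, ∀ j ∈ I, i ≠ j → ¬ G.Adj i j

/-- `α(G; w)`: the maximum weight of an independent set of `G` for the weight `w`. -/
noncomputable def alphaW {V : Type*} [Fintype V] (G : SimpleGraph V) (w : V → ℝ) : ℝ :=
  sSup { x : ℝ | ∃ I : Finset V, IsIndep G I ∧ x = ∑ i ∈ I, w i }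

section
variable {V : Type*} [Fintype V]

lemma exists_maxClique_superset (G : SimpleGraph V) (D : Finset V)
    (hD : G.IsClique (D : Set V)) : ∃ C ∈ maxCliques G, D ⊆ C := by
  classical
  obtain ⟨C, hC, hmax⟩ := Finset.exists_max_image
    (Finset.univ.powerset.filter (fun E : Finset V => G.IsClique (E : Set V) ∧ D ⊆ E))
    Finset.card ⟨D, by simp [hD]⟩
  simp only [mem_filter, mem_powerset] at hC
  refine ⟨C, ?_, hC.2.2⟩
  refine Finset.mem_filter.mpr ⟨Finset.mem_univ _, ?_⟩
  refine ⟨hC.2.1, fun D' hD' hsub => ?_⟩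
  have := hmax D' (by simp [hD', hC.2.2.trans hsub])
  exact (Finset.eq_of_subset_of_card_le hsub this).symm

lemma sum_cG_eq (G : SimpleGraph V) (I : Finset V) [DecidableEq V] :
    ∑ i ∈ I, cG G i = ∑ C ∈ maxCliques G, (C ∩ I).card := by
  classical
  simp only [cG, card_filter]
  rw [Finset.sum_comm]
  refine Finset.sum_congr rfl fun C _ => ?_
  rw [inter_comm, ← filter_mem_eq_inter, card_filter]
  exact Finset.sum_congr rfl fun i _ => by congr

end

theorem alpha_eq_of_zeroOneState' {V : Type*} [Fintype V] [Nonempty V]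
    (G : SimpleGraph V) (v : V → ℝ)
    (hv : (∀ i, 0 ≤ v i ∧ v i ≤ 1) ∧ ∀ C ∈ maxCliques G, ∑ i ∈ C, v i = 1)
    (h01 : ∀ i, v i = 0 ∨ v i = 1) :
    sSup { x : ℝ | ∃ I : Finset V, (∀ i ∈ I, ∀ j ∈ I, i ≠ j → ¬ G.Adj i j) ∧
        x = ∑ i ∈ I, (cG G i : ℝ) } = ((maxCliques G).card : ℝ) ∧
    ∑ i : V, (cG G i : ℝ) * v i = sSup { x : ℝ | ∃ I : Finset V,
        (∀ i ∈ I, ∀ j ∈ I, i ≠ j → ¬ G.Adj i j) ∧ x = ∑ i ∈ I, (cG G i : ℝ) } := by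
  classical
  set S : Finset V := Finset.univ.filter (fun i => v i = 1) with hS
  have hmemS : ∀ i, i ∈ S ↔ v i = 1 := by intro i; simp [hS]
  -- each maximal clique meets S exactly once
  have hA : ∀ C ∈ maxCliques G, (C ∩ S).card = 1 := by
    intro C hC
    have h1 := hv.2 C hC
    have hCS : C ∩ S = C.filter (fun i => v i = 1) := by
      ext x; simp [hS, and_comm]
    rw [← Finset.sum_filter_add_sum_filter_not C (fun i => v i = 1) v] at h1
    have h2 : ∑ i ∈ C.filter (fun i => ¬ v i = 1), v i = 0 := by
      refine Finset.sum_eq_zero fun i hi => ?_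
      rcases h01 i with h | h
      · exact h
      · exact absurd h (Finset.mem_filter.mp hi).2
    have h3 : ∑ i ∈ C.filter (fun i => v i = 1), v i
        = ((C.filter (fun i => v i = 1)).card : ℝ) := by
      rw [Finset.sum_congr rfl (fun i hi => (Finset.mem_filter.mp hi).2)]
      simp
    rw [h2, add_zero, h3] at h1
    rw [hCS]
    exact_mod_cast h1
  -- S is independent
  have hSindep : ∀ i ∈ S, ∀ j ∈ S, i ≠ j → ¬ G.Adj i j := by
    intro i hi j hj hne hadj
    have hclique : G.IsClique (({i, j} : Finset V) : Set V) := by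
      simp only [Finset.coe_insert, Finset.coe_singleton]
      exact SimpleGraph.isClique_pair.mpr (fun _ => hadj)
    obtain ⟨C, hC, hsub⟩ := exists_maxClique_superset G _ hclique
    have h2 : 1 < (C ∩ S).card :=
      Finset.one_lt_card.mpr ⟨i, Finset.mem_inter.mpr ⟨hsub (by simp), hi⟩,
        j, Finset.mem_inter.mpr ⟨hsub (by simp), hj⟩, hne⟩
    have := hA C hC
    omega
  -- any independent set meets each maximal clique at most once
  have hB : ∀ (I : Finset V), (∀ i ∈ I, ∀ j ∈ I, i ≠ j → ¬ G.Adj i j) →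
      ∀ C ∈ maxCliques G, (C ∩ I).card ≤ 1 := by
    intro I hI C hC
    refine Finset.card_le_one.mpr fun a ha b hb => ?_
    by_contra hab
    have hCcl : G.IsClique (C : Set V) := by
      have := (Finset.mem_filter.mp hC).2
      exact this.1
    exact hI a (Finset.mem_inter.mp ha).2 b (Finset.mem_inter.mp hb).2 hab
      (hCcl (Finset.mem_inter.mp ha).1 (Finset.mem_inter.mp hb).1 hab)
  -- sum over S equals number of maximal cliques
  have hSsum : ∑ i ∈ S, cG G i = (maxCliques G).card := by
    rw [sum_cG_eq]
    rw [Finset.sum_congr rfl hA]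
    simp
  have hIub : ∀ (I : Finset V), (∀ i ∈ I, ∀ j ∈ I, i ≠ j → ¬ G.Adj i j) →
      ∑ i ∈ I, cG G i ≤ (maxCliques G).card := by
    intro I hI
    rw [sum_cG_eq]
    calc ∑ C ∈ maxCliques G, (C ∩ I).card ≤ ∑ C ∈ maxCliques G, 1 :=
          Finset.sum_le_sum (hB I hI)
      _ = (maxCliques G).card := by simp
  have hGreat : IsGreatest { x : ℝ | ∃ I : Finset V,
      (∀ i ∈ I, ∀ j ∈ I, i ≠ j → ¬ G.Adj i j) ∧ x = ∑ i ∈ I, (cG G i : ℝ) }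
      ((maxCliques G).card : ℝ) := by
    constructor
    · exact ⟨S, hSindep, by rw [← hSsum]; push_cast; ring⟩
    · rintro x ⟨I, hI, rfl⟩
      have := hIub I hI
      calc ∑ i ∈ I, (cG G i : ℝ) = ((∑ i ∈ I, cG G i : ℕ) : ℝ) := by push_cast; ring
        _ ≤ ((maxCliques G).card : ℝ) := by exact_mod_cast this
  have hsup := hGreat.csSup_eq
  refine ⟨hsup, ?_⟩
  rw [hsup]
  have : ∑ i ∈ S, (cG G i : ℝ) * v i = ∑ i : V, (cG G i : ℝ) * v i := by
    refine Finset.sum_subset (Finset.subset_univ S) fun x _ hx => ?_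
    rcases h01 x with h | h
    · rw [h, mul_zero]
    · exact absurd ((hmemS x).mpr h) hx
  rw [← this]
  calc ∑ i ∈ S, (cG G i : ℝ) * v i = ∑ i ∈ S, (cG G i : ℝ) := by
        refine Finset.sum_congr rfl fun i hi => ?_
        rw [(hmemS i).mp hi, mul_one]
    _ = ((maxCliques G).card : ℝ) := by rw [← hSsum]; push_cast; ring


/-- **If a finite simple graph `G` (with at least one vertex) has a 0-1 state `v`, then
`α(G; c_G) = c(G)` and `∑ i, c_G(i)·v(i) = α(G; c_G)`.** -/
theorem alpha_eq_of_zeroOneState {V : Type*} [Fintype V] [Nonempty V]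
    (G : SimpleGraph V) (v : V → ℝ)
    (hv : IsGraphState G v) (h01 : ∀ i, v i = 0 ∨ v i = 1) :
    alphaW G (fun i => (cG G i : ℝ)) = (numMaxCliques G : ℝ) ∧
    ∑ i : V, (cG G i : ℝ) * v i = alphaW G (fun i => (cG G i : ℝ)) := by
  exact alpha_eq_of_zeroOneState' G v hv h01
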